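/- Let F : ℝ → ℝ be a differentiable function that is bounded from below, and suppose there exist constants ĉ₃ > 0, ĉ₄ ≥ 0 and r ∈ (1,2] such that |F'(s)|^r ≤ ĉ₃|F(s)| + ĉ₄ for all s ∈ ℝ. Then F has polynomial growth of order r' = r/(r−1): there exist constants ĉ₅ > 0 and ĉ₆ ≥ 0 such that |F(s)| ≤ ĉ₅|s|^{r'} + ĉ₆ for all s ∈ ℝ. -/

import Mathlib

/-- `(a+b)^q ≤ 2^q (a^q + b^q)` for nonnegative `a,b,q`. -/
lemma add_rpow_le_aux {a b q : ℝ} (ha : 0 ≤ a) (hb : 0 ≤ b) (hq : 0 ≤ q) :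
    (a + b) ^ q ≤ 2 ^ q * (a ^ q + b ^ q) := by
  have hmax : a + b ≤ 2 * max a b := by
    rcases le_total a b with h | h
    · simp [max_eq_right h]; linarith
    · simp [max_eq_left h]; linarith
  have h1 : (a + b) ^ q ≤ (2 * max a b) ^ q :=
    Real.rpow_le_rpow (by linarith) hmax hq
  have h2 : (2 * max a b) ^ q = 2 ^ q * (max a b) ^ q :=
    Real.mul_rpow (by norm_num) (le_max_of_le_left ha)
  have h3 : (max a b) ^ q ≤ a ^ q + b ^ q := by
    rcases le_total a b with h | h
    · rw [max_eq_right h]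
      have := Real.rpow_nonneg ha q; linarith
    · rw [max_eq_left h]
      have := Real.rpow_nonneg hb q; linarith
  calc (a + b) ^ q ≤ 2 ^ q * (max a b) ^ q := by rw [← h2]; exact h1
    _ ≤ 2 ^ q * (a ^ q + b ^ q) := by
        have h2q : (0:ℝ) ≤ 2 ^ q := Real.rpow_nonneg (by norm_num) q
        nlinarith

/-- If `F : ℝ → ℝ` is differentiable, bounded from below, and `|F'(s)|^r ≤ ĉ₃|F(s)| + ĉ₄`
for some `r ∈ (1,2]`, then `F` has polynomial growth of order `r' = r/(r-1)`. -/
theorem stmt_3 (F : ℝ → ℝ) (hF : Differentiable ℝ F)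
    (m : ℝ) (hm : ∀ s, m ≤ F s)
    (c₃ c₄ r : ℝ) (hc₃ : 0 < c₃) (hc₄ : 0 ≤ c₄) (hr1 : 1 < r) (hr2 : r ≤ 2)
    (hgrow : ∀ s : ℝ, |deriv F s| ^ r ≤ c₃ * |F s| + c₄) :
    ∃ c₅ > (0 : ℝ), ∃ c₆ ≥ (0 : ℝ), ∀ s : ℝ, |F s| ≤ c₅ * |s| ^ (r / (r - 1)) + c₆ := by
  have hr0 : 0 < r := by linarith
  have hrne : r ≠ 0 := ne_of_gt hr0
  set u : ℝ → ℝ := fun s => F s + (-m + |m| + c₄ / c₃ + 1) with hu_def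
  have hcc : 0 ≤ c₄ / c₃ := div_nonneg hc₄ hc₃.le
  have hu1 : ∀ s, (1:ℝ) ≤ u s := by
    intro s
    have := hm s
    have := abs_nonneg m
    simp only [hu_def]
    linarith
  have hupos : ∀ s, (0:ℝ) < u s := fun s => lt_of_lt_of_le one_pos (hu1 s)
  have hFu : ∀ s, |F s| ≤ u s := by
    intro s
    have h1 := hm s
    have h2 : m ≤ |m| := le_abs_self m
    have h3 : -m ≤ |m| := neg_le_abs m
    rcases abs_cases (F s) with ⟨h, _⟩ | ⟨h, _⟩ <;> simp only [hu_def] <;> linarith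
  have hF2 : ∀ s, |F s| ≤ F s - m + |m| := by
    intro s
    have h1 := hm s
    have h2 : m ≤ |m| := le_abs_self m
    have h3 : -m ≤ |m| := neg_le_abs m
    rcases abs_cases (F s) with ⟨h, _⟩ | ⟨h, _⟩ <;> linarith
  have hkey : ∀ s, c₃ * |F s| + c₄ ≤ c₃ * u s := by
    intro s
    have h2 : c₃ * (c₄ / c₃) = c₄ := by field_simp
    have h4 := mul_le_mul_of_nonneg_left (hF2 s) hc₃.le
    have h3 : c₃ * u s = c₃ * (F s - m + |m|) + c₄ + c₃ := by
      simp only [hu_def]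
      nlinarith [h2]
    linarith
  set p : ℝ := (r - 1) / r with hp_def
  have hp0 : 0 < p := div_pos (by linarith) hr0
  have hpne : p ≠ 0 := ne_of_gt hp0
  have hpinv : p⁻¹ = r / (r - 1) := by
    rw [hp_def, inv_div]
  have hu' : ∀ s, HasDerivAt u (deriv F s) s := by
    intro s
    exact ((hF s).hasDerivAt).add_const _
  -- derivative bound on F
  have hderiv_bd : ∀ s, |deriv F s| ≤ (c₃ * u s) ^ (1 / r) := by
    intro s
    have h0 : 0 ≤ |deriv F s| := abs_nonneg _
    have h1 : |deriv F s| = (|deriv F s| ^ r) ^ r⁻¹ := (Real.rpow_rpow_inv h0 hrne).symm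
    rw [h1, one_div]
    exact Real.rpow_le_rpow (Real.rpow_nonneg h0 r) (le_trans (hgrow s) (hkey s))
      (by positivity)
  set L : ℝ := p * c₃ ^ (1 / r) with hL_def
  have hL0 : 0 < L := mul_pos hp0 (Real.rpow_pos_of_pos hc₃ _)
  set φ : ℝ → ℝ := fun s => u s ^ p with hφ_def
  have hφ' : ∀ s, HasDerivAt φ (p * u s ^ (p - 1) * deriv F s) s := by
    intro s
    exact (Real.hasDerivAt_rpow_const (Or.inl (ne_of_gt (hupos s)))).comp s (hu' s)
  have hφbd : ∀ s, |p * u s ^ (p - 1) * deriv F s| ≤ L := by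
    intro s
    have hup : 0 < u s := hupos s
    have h1 : |p * u s ^ (p - 1) * deriv F s|
        = p * u s ^ (p - 1) * |deriv F s| := by
      rw [abs_mul, abs_of_nonneg (by positivity : (0:ℝ) ≤ p * u s ^ (p - 1))]
    rw [h1]
    have h2 : p * u s ^ (p - 1) * |deriv F s| ≤ p * u s ^ (p - 1) * (c₃ * u s) ^ (1 / r) := by
      apply mul_le_mul_of_nonneg_left (hderiv_bd s) (by positivity)
    refine h2.trans ?_
    have h3 : (c₃ * u s) ^ (1 / r) = c₃ ^ (1 / r) * u s ^ (1 / r) :=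
      Real.mul_rpow hc₃.le hup.le
    have h4 : u s ^ (p - 1) * u s ^ (1 / r) = 1 := by
      rw [← Real.rpow_add hup]
      have : p - 1 + 1 / r = 0 := by
        field_simp [hp_def]
        rw [hp_def, mul_zero, sub_mul, div_mul_cancel₀ _ hrne]; ring
      rw [this, Real.rpow_zero]
    have h5 : p * u s ^ (p - 1) * (c₃ * u s) ^ (1 / r) = L := by
      rw [h3]
      calc p * u s ^ (p - 1) * (c₃ ^ (1 / r) * u s ^ (1 / r))
          = p * c₃ ^ (1 / r) * (u s ^ (p - 1) * u s ^ (1 / r)) := by ring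
        _ = L := by rw [h4, hL_def]; ring
    exact le_of_eq h5
  -- Lipschitz estimate for φ
  have hlip : ∀ s : ℝ, φ s ≤ φ 0 + L * |s| := by
    intro s
    have := Convex.norm_image_sub_le_of_norm_hasDerivWithin_le
      (f := φ) (f' := fun s => p * u s ^ (p - 1) * deriv F s) (s := Set.univ)
      (C := L) (fun x _ => (hφ' x).hasDerivWithinAt) (fun x _ => hφbd x)
      convex_univ (Set.mem_univ 0) (Set.mem_univ s)
    simp only [Real.norm_eq_abs, sub_zero] at this
    have h := (abs_le.mp (this.trans_eq rfl)).1
    have h2 := le_of_abs_le this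
    linarith
  -- conclude
  have hφ0 : 0 ≤ φ 0 := Real.rpow_nonneg (hupos 0).le p
  refine ⟨2 ^ p⁻¹ * L ^ p⁻¹,
    mul_pos (Real.rpow_pos_of_pos two_pos _) (Real.rpow_pos_of_pos hL0 _),
    2 ^ p⁻¹ * (φ 0) ^ p⁻¹,
    mul_nonneg (Real.rpow_nonneg (by norm_num) _) (Real.rpow_nonneg hφ0 _), fun s => ?_⟩
  have hus : u s = (φ s) ^ p⁻¹ := (Real.rpow_rpow_inv (hupos s).le hpne).symm
  have h1 : u s ≤ (φ 0 + L * |s|) ^ p⁻¹ := by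
    rw [hus]
    exact Real.rpow_le_rpow (Real.rpow_nonneg (hupos s).le p) (hlip s) (by positivity)
  have h2 : (φ 0 + L * |s|) ^ p⁻¹ ≤ 2 ^ p⁻¹ * ((φ 0) ^ p⁻¹ + (L * |s|) ^ p⁻¹) :=
    add_rpow_le_aux hφ0 (by positivity) (by positivity)
  have h3 : (L * |s|) ^ p⁻¹ = L ^ p⁻¹ * |s| ^ p⁻¹ :=
    Real.mul_rpow hL0.le (abs_nonneg s)
  have := (hFu s).trans (h1.trans h2)
  rw [h3] at this
  rw [← hpinv]
  nlinarith [Real.rpow_nonneg (abs_nonneg s) p⁻¹, Real.rpow_nonneg (by norm_num : (0:ℝ) ≤ 2) p⁻¹,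
    Real.rpow_nonneg hL0.le p⁻¹, this]
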